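/- Let ℳ be a finite automaton and A ⊆ C_ℳ not ≤₀-upward-closed (c ∈ A, c ≤₀ d, d ∉ A for some cycles c, d). Then the Π⁰₁-complete set {x ∈ {0,1}^ω : x contains no occurrence of 1} Lipschitz-reduces (reduces via a function g with g(ξ)(n) depending only on ξ↾(n+1), up to a constant shift realized by a synchronous continuous function) to f_ℳ⁻¹(A). -/

import Mathlib

/-- The run of an automaton on an infinite word. -/
def run {X Q : Type*} (δ : Q → X → Q) (init : Q) (ξ : ℕ → X) : ℕ → Q :=
  fun n => Nat.rec init (fun m q => δ q (ξ m)) n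

/-- The set of states occurring infinitely often in the run on `ξ`. -/
def infOcc {X Q : Type*} (δ : Q → X → Q) (init : Q) (ξ : ℕ → X) : Set Q :=
  {q | ∀ N : ℕ, ∃ n : ℕ, N ≤ n ∧ run δ init ξ n = q}

/-- The set of cycles of the automaton. -/
def cycles {X Q : Type*} (δ : Q → X → Q) (init : Q) : Set (Set Q) :=
  {c | ∃ ξ : ℕ → X, infOcc δ init ξ = c}

/-- Reachability of state `r` from state `q`. -/
def reach {X Q : Type*} (δ : Q → X → Q) (q r : Q) : Prop :=
  ∃ w : List X, w.foldl δ q = r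

/-- `c ≤₀ d`: some state of `d` is reachable from some state of `c`. -/
def cle0 {X Q : Type*} (δ : Q → X → Q) (c d : Set Q) : Prop :=
  ∃ q ∈ c, ∃ r ∈ d, reach δ q r

section Aux
variable {X Q : Type*} (δ : Q → X → Q)


lemma run_eq_foldl (init : Q) (ξ : ℕ → X) (n : ℕ) :
    run δ init ξ n = (List.ofFn fun i : Fin n => ξ i).foldl δ init := by
  induction n with
  | zero => simp [run]
  | succ n ih =>
    show δ (run δ init ξ n) (ξ n) = _
    rw [List.ofFn_succ' (fun i : Fin (n+1) => ξ i), List.concat_eq_append,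
      List.foldl_concat]
    simp only [Fin.coe_castSucc, Fin.val_last]
    rw [← ih]

lemma ofFn_add_split (ξ : ℕ → X) (a b : ℕ) :
    (List.ofFn fun i : Fin (a + b) => ξ i) =
      (List.ofFn fun i : Fin a => ξ i) ++ (List.ofFn fun i : Fin b => ξ (a + i)) := by
  rw [List.ofFn_add]
  simp [Fin.castAdd, Fin.natAdd]

lemma run_add (init : Q) (ξ : ℕ → X) (a b : ℕ) :
    run δ init ξ (a + b) = (List.ofFn fun i : Fin b => ξ (a + i)).foldl δ (run δ init ξ a) := by
  rw [run_eq_foldl, run_eq_foldl, ofFn_add_split, List.foldl_append]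

/-- eventually periodic word: prefix `p`, loop `b`, default `x0`. -/
def ww {X : Type*} (x0 : X) (p b : List X) (n : ℕ) : X :=
  if n < p.length then p.getD n x0 else b.getD ((n - p.length) % b.length) x0

lemma mod_succ_eq (L m : ℕ) (hL : 0 < L) :
    (m + 1) % L = if m % L + 1 = L then 0 else m % L + 1 := by
  have hj : m % L < L := Nat.mod_lt _ hL
  rcases eq_or_lt_of_le (show 1 ≤ L from hL) with h1 | h1
  · simp [← h1, Nat.mod_one]
  · have he : 1 % L = 1 := Nat.mod_eq_of_lt h1
    rw [Nat.add_mod, he]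
    split_ifs with h
    · rw [h, Nat.mod_self]
    · exact Nat.mod_eq_of_lt (by omega)

lemma take_loop_step (x0 : X) (b : List X) (hb : b ≠ []) (q0 : Q)
    (hloop : b.foldl δ q0 = q0) (m : ℕ) :
    (b.take ((m + 1) % b.length)).foldl δ q0
      = δ ((b.take (m % b.length)).foldl δ q0) (b.getD (m % b.length) x0) := by
  have hL : 0 < b.length := List.length_pos_iff.2 hb
  have hj : m % b.length < b.length := Nat.mod_lt _ hL
  have hgetD : b.getD (m % b.length) x0 = b[m % b.length] := List.getD_eq_getElem b _ hj
  have htake : b.take (m % b.length + 1) = b.take (m % b.length) ++ [b[m % b.length]] := by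
    rw [List.take_succ, List.getElem?_eq_getElem hj]
    rfl
  rw [hgetD, mod_succ_eq _ _ hL]
  split_ifs with h
  · have : b.take (m % b.length + 1) = b := by rw [h]; exact List.take_length
    rw [htake] at this
    calc (b.take 0).foldl δ q0 = q0 := rfl
      _ = b.foldl δ q0 := hloop.symm
      _ = _ := by
          conv_lhs => rw [← this, List.foldl_append]
          rfl
  · rw [htake, List.foldl_append]
    rfl

lemma run_ww (x0 : X) (init : Q) (p b : List X) (hb : b ≠ [])
    (hloop : b.foldl δ (p.foldl δ init) = p.foldl δ init) (m : ℕ) :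
    run δ init (ww x0 p b) (p.length + m)
      = (b.take (m % b.length)).foldl δ (p.foldl δ init) := by
  induction m with
  | zero =>
    rw [run_eq_foldl]
    have hofn : (List.ofFn fun i : Fin (p.length + 0) => ww x0 p b i) = p := by
      apply List.ext_getElem
      · simp
      · intro i h1 h2
        simp only [List.getElem_ofFn, ww]
        rw [if_pos h2, List.getD_eq_getElem p _ h2]
    rw [hofn]
    simp
  | succ m ih =>
    have hstep : run δ init (ww x0 p b) (p.length + (m + 1))
        = δ (run δ init (ww x0 p b) (p.length + m)) (ww x0 p b (p.length + m)) := rfl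
    have hww : ww x0 p b (p.length + m) = b.getD (m % b.length) x0 := by
      simp [ww]
    rw [hstep, ih, hww, take_loop_step δ x0 b hb _ hloop m]

lemma infOcc_ww (x0 : X) (init : Q) (p b : List X) (hb : b ≠ [])
    (hloop : b.foldl δ (p.foldl δ init) = p.foldl δ init) :
    infOcc δ init (ww x0 p b)
      = {x | ∃ j, (b.take j).foldl δ (p.foldl δ init) = x} := by
  have hL : 0 < b.length := List.length_pos_iff.2 hb
  ext q
  constructor
  · intro hq
    obtain ⟨n, hn, hrun⟩ := hq p.length
    obtain ⟨m, rfl⟩ : ∃ m, n = p.length + m := ⟨n - p.length, by omega⟩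
    exact ⟨m % b.length, by rw [← run_ww δ x0 init p b hb hloop m]; exact hrun⟩
  · rintro ⟨j, rfl⟩ N
    set j' := if j < b.length then j else 0 with hj'def
    have hj' : j' < b.length := by
      rw [hj'def]; split_ifs with h
      · exact h
      · exact hL
    have hval : (b.take j').foldl δ (p.foldl δ init) = (b.take j).foldl δ (p.foldl δ init) := by
      rw [hj'def]; split_ifs with h
      · rfl
      · rw [List.take_of_length_le (Nat.le_of_not_lt h)]
        simp [hloop]
    refine ⟨p.length + (b.length * N + j'), by nlinarith, ?_⟩
    rw [run_ww δ x0 init p b hb hloop, Nat.mul_add_mod, Nat.mod_eq_of_lt hj', hval]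


lemma take_ofFn' {n : ℕ} (f : Fin n → X) (j : ℕ) :
    (List.ofFn f).take j
      = List.ofFn (fun i : Fin (min j n) => f ⟨i.1, lt_of_lt_of_le i.2 (min_le_right j n)⟩) := by
  apply List.ext_getElem
  · simp
  · intro i h1 h2
    simp only [List.getElem_take, List.getElem_ofFn]

lemma pigeon [Finite Q] {s : Set ℕ} (hs : s.Infinite) (f : ℕ → Q) :
    ∃ q, {n | n ∈ s ∧ f n = q}.Infinite := by
  haveI := hs.to_subtype
  obtain ⟨q, hq⟩ := Finite.exists_infinite_fiber (fun n : s => f n)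
  refine ⟨q, ?_⟩
  have himg : {n | n ∈ s ∧ f n = q} = Subtype.val '' ((fun n : s => f n) ⁻¹' {q}) := by
    ext n
    constructor
    · rintro ⟨hns, hfn⟩
      exact ⟨⟨n, hns⟩, hfn, rfl⟩
    · rintro ⟨⟨m, hm⟩, hfm, rfl⟩
      exact ⟨hm, hfm⟩
  rw [himg]
  exact (Set.infinite_coe_iff.1 hq).image (Set.injOn_of_injective Subtype.val_injective)

lemma infOcc_of_infinite (init : Q) (ξ : ℕ → X) (q : Q)
    (h : {n | run δ init ξ n = q}.Infinite) : q ∈ infOcc δ init ξ := by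
  intro N
  obtain ⟨n, hn, hNn⟩ := h.exists_gt N
  exact ⟨n, le_of_lt hNn, hn⟩

/-- eventual confinement of the run inside its infinity set -/
lemma eventually_in_infOcc [Finite Q] (init : Q) (ξ : ℕ → X) :
    ∃ N0, ∀ n, N0 ≤ n → run δ init ξ n ∈ infOcc δ init ξ := by
  by_contra hcon
  push_neg at hcon
  have hT : {n | run δ init ξ n ∉ infOcc δ init ξ}.Infinite := by
    rw [Set.infinite_coe_iff.symm]
    rw [Set.infinite_coe_iff]
    apply Set.infinite_of_not_bddAbove
    rintro ⟨N0, hN0⟩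
    obtain ⟨n, hn, hrun⟩ := hcon (N0 + 1)
    exact absurd (hN0 hrun) (by omega)
  obtain ⟨q, hq⟩ := pigeon hT (run δ init ξ)
  have hq' : q ∈ infOcc δ init ξ :=
    infOcc_of_infinite δ init ξ q (hq.mono (fun n hn => hn.2))
  obtain ⟨n, hn1, hn2⟩ := hq.nonempty
  exact hn1 (hn2 ▸ hq')

lemma loop_package [Finite Q] (init : Q) (ξ : ℕ → X) :
    ∃ (q0 : Q) (z u : List X), q0 ∈ infOcc δ init ξ ∧ z.foldl δ init = q0 ∧ u ≠ [] ∧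
      u.foldl δ q0 = q0 ∧
      (∀ x, x ∈ infOcc δ init ξ ↔ ∃ j, (u.take j).foldl δ q0 = x) := by
  classical
  set c := infOcc δ init ξ with hc
  obtain ⟨N0, hN0⟩ := eventually_in_infOcc δ init ξ
  obtain ⟨q0, hq0inf⟩ := pigeon Set.infinite_univ (run δ init ξ)
  have hq0occ : q0 ∈ c :=
    infOcc_of_infinite δ init ξ q0 (hq0inf.mono (fun n hn => hn.2))
  obtain ⟨n1, hn1N, hn1⟩ := hq0occ N0
  have hcfin : c.Finite := Set.toFinite c
  set mfun : Q → ℕ := fun x =>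
    if h : x ∈ c then (h (n1 + 1)).choose else 0 with hmdef
  have hmfun : ∀ x ∈ c, n1 + 1 ≤ mfun x ∧ run δ init ξ (mfun x) = x := by
    intro x hx
    simp only [hmdef, dif_pos hx]
    exact (hx (n1 + 1)).choose_spec
  set M : ℕ := hcfin.toFinset.sup mfun with hM
  have hMle : ∀ x ∈ c, mfun x ≤ M :=
    fun x hx => Finset.le_sup (hcfin.mem_toFinset.2 hx)
  obtain ⟨n2, hn2M, hn2⟩ := hq0occ (M + 1)
  have h12 : n1 < n2 := by
    have h1 := (hmfun q0 hq0occ).1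
    have h2 := hMle q0 hq0occ
    omega
  refine ⟨q0, List.ofFn (fun i : Fin n1 => ξ i),
    List.ofFn (fun i : Fin (n2 - n1) => ξ (n1 + i)), hq0occ, (run_eq_foldl δ init ξ n1).symm.trans hn1, ?_, ?_, ?_⟩
  · apply List.ne_nil_of_length_pos
    simp [h12, Nat.sub_pos_of_lt h12]
  · have := run_add δ init ξ n1 (n2 - n1)
    rw [Nat.add_sub_cancel' (le_of_lt h12), hn1, hn2] at this
    exact this.symm
  · have hkey : ∀ j, ((List.ofFn (fun i : Fin (n2 - n1) => ξ (n1 + i))).take j).foldl δ q0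
        = run δ init ξ (n1 + min j (n2 - n1)) := by
      intro j
      rw [take_ofFn', run_add δ init ξ n1 (min j (n2 - n1)), hn1]
    intro x
    constructor
    · intro hx
      obtain ⟨hm1, hm2⟩ := hmfun x hx
      have hmM := hMle x hx
      refine ⟨mfun x - n1, ?_⟩
      rw [hkey]
      have : min (mfun x - n1) (n2 - n1) = mfun x - n1 := by omega
      rw [this, Nat.add_sub_cancel' (by omega), hm2]
    · rintro ⟨j, rfl⟩
      rw [hkey]
      exact hN0 _ (by omega)

lemma ww_absorb (x0 : X) (z u : List X) (hu : u ≠ []) :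
    ww x0 z u = ww x0 (z ++ u) u := by
  have hL : 0 < u.length := List.length_pos_iff.2 hu
  funext n
  simp only [ww, List.length_append]
  by_cases h1 : n < z.length
  · rw [if_pos h1, if_pos (by omega)]
    exact (List.getD_append z u x0 n h1).symm
  · by_cases h2 : n < z.length + u.length
    · rw [if_neg h1, if_pos h2,
        List.getD_append_right z u x0 n (by omega),
        Nat.mod_eq_of_lt (by omega)]
    · rw [if_neg h1, if_neg h2]
      congr 1
      have h3 : n - z.length = (n - (z.length + u.length)) + u.length := by omega
      rw [h3, Nat.add_mod_right]

lemma ww_eq_getD (x0 : X) (u : List X) (hu : u ≠ []) (k : ℕ) :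
    ∀ (z : List X) (n : ℕ), n < z.length + k * u.length →
      ww x0 z u n = (z ++ (List.replicate k u).flatten).getD n x0 := by
  induction k with
  | zero =>
    intro z n hn
    simp only [Nat.zero_mul, Nat.add_zero] at hn
    simp only [List.replicate_zero, List.flatten_nil, List.append_nil, ww, if_pos hn]
  | succ k ih =>
    intro z n hn
    rw [ww_absorb x0 z u hu]
    have hn' : n < (z ++ u).length + k * u.length := by
      rw [Nat.succ_mul] at hn
      simp only [List.length_append]; omega
    rw [ih (z ++ u) n hn']
    congr 1
    rw [List.replicate_succ, List.flatten_cons, List.append_assoc]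

lemma join_replicate_foldl (q0 : Q) (u : List X) (hu : u.foldl δ q0 = q0) :
    ∀ k, ((List.replicate k u).flatten).foldl δ q0 = q0 := by
  intro k
  induction k with
  | zero => rfl
  | succ k ih => rw [List.replicate_succ, List.flatten_cons, List.foldl_append, hu, ih]

end Aux

/-- If `A ⊆ C_ℳ` is not `≤₀`-upward-closed (witnessed by cycles `c ∈ A`, `c ≤₀ d`,
`d ∉ A`), then the Π⁰₁-complete set `{x ∈ 2^ω : x contains no 1}` reduces to
`f_ℳ⁻¹(A)` via a synchronous continuous (Lipschitz) function
`g(ξ)(n) = φ(ξ↾(n+1))`. -/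
theorem stmt18 {X Q : Type*} [Finite Q] (δ : Q → X → Q) (init : Q)
    (A : Set (Set Q)) (c d : Set Q)
    (hc : c ∈ cycles δ init) (hd : d ∈ cycles δ init)
    (hcA : c ∈ A) (hdA : d ∉ A) (hcd : cle0 δ c d) :
    ∃ φ : List Bool → X, ∀ ξ : ℕ → Bool,
      ((∀ n, ξ n = false) ↔
        infOcc δ init (fun n => φ (List.ofFn fun i : Fin (n + 1) => ξ i)) ∈ A) := by
  classical
  obtain ⟨ξc, hξc⟩ := hc
  obtain ⟨ξd, hξd⟩ := hd
  set x0 : X := ξc 0 with hx0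
  obtain ⟨q0, z, u, hq0c, hz, hu, huloop, huc⟩ := loop_package δ init ξc
  rw [hξc] at hq0c huc
  obtain ⟨r0, z', v, hr0d, hz', hv, hvloop, hvd⟩ := loop_package δ init ξd
  rw [hξd] at hr0d hvd
  -- build connector w from q0 to r0
  obtain ⟨qq, hqq, rr, hrr, w0, hw0⟩ := hcd
  obtain ⟨j0, hj0⟩ := (huc qq).1 hqq
  obtain ⟨i0, hi0⟩ := (hvd rr).1 hrr
  have hwex : ∃ w : List X, w.foldl δ q0 = r0 := by
    refine ⟨u.take j0 ++ w0 ++ v.drop i0, ?_⟩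
    rw [List.foldl_append, List.foldl_append, hj0, hw0]
    have h5 : (v.take i0 ++ v.drop i0).foldl δ r0 = r0 := by
      rw [List.take_append_drop]; exact hvloop
    rw [List.foldl_append, hi0] at h5
    exact h5
  obtain ⟨w, hw⟩ := hwex
  have hL : 0 < u.length := List.length_pos_iff.2 hu
  -- the reduction
  refine ⟨fun s => if true ∈ s then
      ww x0 (z ++ (List.replicate (s.idxOf true) u).flatten ++ w) v (s.length - 1)
    else ww x0 z u (s.length - 1), ?_⟩
  intro ξ
  have hmem : ∀ n : ℕ, (true ∈ List.ofFn fun i : Fin (n + 1) => ξ i) ↔ ∃ i ≤ n, ξ i = true := by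
    intro n
    rw [List.mem_ofFn]
    constructor
    · rintro ⟨i, hi⟩
      exact ⟨i, Nat.lt_succ_iff.1 i.2, hi⟩
    · rintro ⟨i, hi, hit⟩
      exact ⟨⟨i, Nat.lt_succ_of_le hi⟩, hit⟩
  by_cases hall : ∀ n, ξ n = false
  · -- output is z · u^ω, infinity set is c
    have hfun : (fun n => if true ∈ (List.ofFn fun i : Fin (n + 1) => ξ i) then
        ww x0 (z ++ (List.replicate ((List.ofFn fun i : Fin (n + 1) => ξ i).idxOf true) u).flatten ++ w) v
          ((List.ofFn fun i : Fin (n + 1) => ξ i).length - 1)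
      else ww x0 z u ((List.ofFn fun i : Fin (n + 1) => ξ i).length - 1)) = ww x0 z u := by
      funext n
      have hnot : ¬ (true ∈ List.ofFn fun i : Fin (n + 1) => ξ i) := by
        rw [hmem]
        rintro ⟨i, -, hit⟩
        rw [hall i] at hit
        exact Bool.false_ne_true hit
      rw [if_neg hnot]
      simp
    simp only [hfun]
    have : infOcc δ init (ww x0 z u) = c := by
      rw [infOcc_ww δ x0 init z u hu (by rw [hz, huloop]), hz]
      ext x
      exact (huc x).symm
    rw [this]
    simp [hcA, hall]
  · -- output is z · u^k · w · v^ω, infinity set is d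
    push_neg at hall
    have hex : ∃ n, ξ n = true := by
      obtain ⟨n, hn⟩ := hall
      exact ⟨n, Bool.not_eq_false (ξ n) |>.mp hn⟩
    set k : ℕ := Nat.find hex with hk
    have hkt : ξ k = true := Nat.find_spec hex
    have hkmin : ∀ i < k, ξ i = false := by
      intro i hi
      have := Nat.find_min hex hi
      exact Bool.not_eq_true (ξ i) |>.mp this
    set Ak : List X := z ++ (List.replicate k u).flatten ++ w with hAk
    have hAkfold : Ak.foldl δ init = r0 := by
      rw [hAk, List.foldl_append, List.foldl_append, hz,
        join_replicate_foldl δ q0 u huloop, hw]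
    have hfun : (fun n => if true ∈ (List.ofFn fun i : Fin (n + 1) => ξ i) then
        ww x0 (z ++ (List.replicate ((List.ofFn fun i : Fin (n + 1) => ξ i).idxOf true) u).flatten ++ w) v
          ((List.ofFn fun i : Fin (n + 1) => ξ i).length - 1)
      else ww x0 z u ((List.ofFn fun i : Fin (n + 1) => ξ i).length - 1)) = ww x0 Ak v := by
      funext n
      by_cases hnk : k ≤ n
      · have hin : true ∈ List.ofFn fun i : Fin (n + 1) => ξ i :=
          (hmem n).2 ⟨k, hnk, hkt⟩
        have hidx : (List.ofFn fun i : Fin (n + 1) => ξ i).idxOf true = k := by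
          show List.findIdx (· == true) _ = k
          rw [List.findIdx_eq (by simp; omega)]
          constructor
          · simp only [List.getElem_ofFn]
            simp [hkt]
          · intro j hj
            simp only [List.getElem_ofFn]
            simp [hkmin j hj]
        rw [if_pos hin, hidx]
        simp only [List.length_ofFn, Nat.add_sub_cancel, hAk, List.append_assoc]
      · push_neg at hnk
        have hnot : ¬ (true ∈ List.ofFn fun i : Fin (n + 1) => ξ i) := by
          rw [hmem]
          rintro ⟨i, hi, hit⟩
          rw [hkmin i (lt_of_le_of_lt hi hnk)] at hit
          exact Bool.false_ne_true hit
        rw [if_neg hnot]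
        simp only [List.length_ofFn, Nat.add_sub_cancel]
        -- n < k : both words agree on position n
        have hkk : k ≤ k * u.length := Nat.le_mul_of_pos_right k hL
        have h1 : n < z.length + k * u.length := by omega
        have h2 : n < Ak.length := by
          rw [hAk]
          simp only [List.length_append, List.length_flatten, List.map_replicate,
            List.sum_replicate, smul_eq_mul]
          omega
        have h4 : n < (z ++ (List.replicate k u).flatten).length := by
          simp only [List.length_append, List.length_flatten, List.map_replicate,
            List.sum_replicate, smul_eq_mul]
          omega
        calc ww x0 z u n
            = (z ++ (List.replicate k u).flatten).getD n x0 := ww_eq_getD x0 u hu k z n h1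
          _ = Ak.getD n x0 := by
              conv_rhs => rw [hAk, List.getD_append _ w x0 n h4]
          _ = ww x0 Ak v n := (if_pos h2).symm
    simp only [hfun]
    have : infOcc δ init (ww x0 Ak v) = d := by
      rw [infOcc_ww δ x0 init Ak v hv (by rw [hAkfold, hvloop]), hAkfold]
      ext x
      exact (hvd x).symm
    rw [this]
    constructor
    · intro h
      rw [h k] at hkt
      exact absurd hkt (Bool.false_ne_true)
    · intro h
      exact absurd h hdA
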